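/- arXiv:2602.10028 — 3 statements merged into one kernel-verified Lean document; each statement's English description precedes it below -/
import Mathlib

section
/- Let λ ∈ 𝔽_q^*, m a positive integer with gcd(m, g) = 1 and g ≡ 1 (mod ord(λ)), and h(x) ∈ 𝔽_q[x] with gcd(h(x), x^m − λ) = 1. Then the 𝔽_q-linear map φ on 𝔽_q[x]/(x^m − λ) given by φ(Q̄(x)) = Q̄(x^g)·h̄(x) is bijective. -/
open Polynomial

lemma key_comp_dvd {F : Type*} [Field F] (q : F[X]) (e : ℕ)
    (hdvd : q ∣ X ^ e - X) : ∀ P : F[X], q ∣ P.comp (X ^ e) - P := by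
  intro P
  induction P using Polynomial.induction_on with
  | C a => simp
  | add p r hp hr =>
    have := dvd_add hp hr
    simpa [add_comp, sub_add_sub_comm] using this
  | monomial n a ih =>
    obtain ⟨u, hu⟩ := ih
    obtain ⟨v, hv⟩ := hdvd
    refine ⟨X ^ e * u + C a * X ^ n * v, ?_⟩
    have h1 : (C a * X ^ n).comp (X ^ e) - C a * X ^ n = q * u := hu
    have h2 : (C a * X ^ (n + 1)).comp (X ^ e) = X ^ e * ((C a * X ^ n).comp (X ^ e)) := by
      simp only [mul_comp, X_pow_comp, C_comp, pow_succ, X_comp]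
      ring
    rw [h2, mul_add]
    linear_combination (X ^ e : F[X]) * h1 + (C a * X ^ n) * hv

lemma aux_dvd_pow_sub_X {F : Type*} [Field F] (m o e : ℕ) (lam : F)
    (hlamo : lam ^ o = 1) (he : 1 ≤ e) (hNe : m * o ∣ e - 1) :
    (X ^ m - C lam : F[X]) ∣ X ^ e - X := by
  have hd1 : (X ^ m - C lam : F[X]) ∣ X ^ (m * o) - 1 := by
    have := sub_dvd_pow_sub_pow (X ^ m : F[X]) (C lam) o
    rwa [← pow_mul, ← C_pow, hlamo, map_one] at this
  obtain ⟨k, hk⟩ := hNe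
  have hd2 : (X ^ m - C lam : F[X]) ∣ X ^ (e - 1) - 1 := by
    have := sub_dvd_pow_sub_pow (X ^ (m * o) : F[X]) 1 k
    rw [← pow_mul, one_pow, ← hk] at this
    exact hd1.trans this
  obtain ⟨d, hd⟩ : ∃ d, e = d + 1 := ⟨e - 1, by omega⟩
  subst hd
  have heq : (X ^ (d + 1) - X : F[X]) = (X ^ (d + 1 - 1) - 1) * X := by
    simp only [Nat.add_sub_cancel]
    ring
  rw [heq]
  exact hd2.mul_right X

lemma aux_exists_inverse (N g : ℕ) (hN : 0 < N) (hgN : Nat.Coprime g N) :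
    ∃ g' : ℕ, 0 < g' ∧ g * g' ≡ 1 [MOD N] := by
  haveI : NeZero N := ⟨hN.ne'⟩
  set u := ZMod.unitOfCoprime g hgN with hu
  refine ⟨(((u⁻¹ : (ZMod N)ˣ) : ZMod N)).val + N, by positivity, ?_⟩
  have : ((g * ((((u⁻¹ : (ZMod N)ˣ) : ZMod N)).val + N) : ℕ) : ZMod N) = ((1 : ℕ) : ZMod N) := by
    push_cast
    rw [ZMod.natCast_val, ZMod.cast_id, ZMod.natCast_self, add_zero]
    have hgu : ((g : ℕ) : ZMod N) = (u : ZMod N) := (ZMod.coe_unitOfCoprime g hgN).symm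
    rw [hgu, ← Units.val_mul, mul_inv_cancel, Units.val_one]
  exact (ZMod.natCast_eq_natCast_iff _ _ _).mp this

theorem stmt_4 (F : Type*) [Field F] [Fintype F] (m g : ℕ) (hm : 0 < m) (hg : 0 < g)
    (lam : F) (hlam : lam ≠ 0) (hmg : Nat.gcd m g = 1)
    (hcong : g ≡ 1 [MOD orderOf lam]) (h : F[X])
    (hcop : IsCoprime h (X ^ m - C lam))
    (φ : (F[X] ⧸ Ideal.span {X ^ m - C lam}) →ₗ[F] (F[X] ⧸ Ideal.span {X ^ m - C lam}))
    (hφ : ∀ Q : F[X],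
        φ (Ideal.Quotient.mk (Ideal.span {X ^ m - C lam}) Q) =
          Ideal.Quotient.mk (Ideal.span {X ^ m - C lam}) (Q.comp (X ^ g) * h)) :
    Function.Bijective φ := by
  -- finiteness of the quotient
  have hpne : (X ^ m - C lam : F[X]) ≠ 0 := X_pow_sub_C_ne_zero hm lam
  haveI : Module.Finite F (F[X] ⧸ Ideal.span {(X ^ m - C lam : F[X])}) :=
    Module.Finite.of_basis (AdjoinRoot.powerBasis hpne).basis
  haveI : Finite (F[X] ⧸ Ideal.span {(X ^ m - C lam : F[X])}) := Module.finite_of_finite F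
  rw [← Finite.injective_iff_bijective]
  -- order of lam is positive
  have hord : 0 < orderOf lam := by
    have : IsOfFinOrder lam := by
      refine isOfFinOrder_iff_pow_eq_one.mpr ⟨Fintype.card F - 1, ?_, ?_⟩
      · have := Fintype.one_lt_card_iff_nontrivial.mpr (inferInstance : Nontrivial F)
        omega
      · exact FiniteField.pow_card_sub_one_eq_one lam hlam
    exact this.orderOf_pos
  have hlamo : lam ^ orderOf lam = 1 := pow_orderOf_eq_one lam
  -- coprimality of g with N = m * orderOf lam
  have hgo : Nat.Coprime g (orderOf lam) := by
    obtain ⟨t, ht⟩ := (Nat.modEq_iff_dvd' hg).mp hcong.symm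
    have : g = 1 + orderOf lam * t := by omega
    rw [this]
    simpa using Nat.coprime_mul_left_add_left (orderOf lam) 1 t |>.mpr
      (Nat.coprime_one_left (orderOf lam))
  have hgN : Nat.Coprime g (m * orderOf lam) :=
    Nat.Coprime.mul_right (Nat.coprime_comm.mp hmg) hgo
  obtain ⟨g', hg'pos, hgg'⟩ :=
    aux_exists_inverse (m * orderOf lam) g (Nat.mul_pos hm hord) hgN
  have hepos : 1 ≤ g * g' := Nat.one_le_iff_ne_zero.mpr (by positivity)
  have hNe : m * orderOf lam ∣ g * g' - 1 := (Nat.modEq_iff_dvd' hepos).mp hgg'.symm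
  -- g' ≡ 1 mod orderOf lam, hence lam ^ g' = lam
  have hg'cong : g' ≡ 1 [MOD orderOf lam] := by
    have h1 : g * g' ≡ 1 [MOD orderOf lam] :=
      hgg'.of_dvd (Dvd.intro_left m rfl)
    have h2 : g * g' ≡ 1 * g' [MOD orderOf lam] := hcong.mul_right g'
    simpa using h2.symm.trans h1
  have hlamg' : lam ^ g' = lam := by
    obtain ⟨t, ht⟩ := (Nat.modEq_iff_dvd' hg'pos).mp hg'cong.symm
    have : g' = 1 + orderOf lam * t := by omega
    rw [this, pow_add, pow_one, pow_mul, hlamo, one_pow, mul_one]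
  have hd3 : (X ^ m - C lam : F[X]) ∣ X ^ (g * g') - X :=
    aux_dvd_pow_sub_X m (orderOf lam) (g * g') lam hlamo hepos hNe
  -- injectivity
  intro a b hab
  have hz : φ (a - b) = 0 := by rw [map_sub, hab, sub_self]
  obtain ⟨Q, hQ⟩ := Ideal.Quotient.mk_surjective
    (I := Ideal.span {(X ^ m - C lam : F[X])}) (a - b)
  rw [← hQ, hφ Q, Ideal.Quotient.eq_zero_iff_mem, Ideal.mem_span_singleton] at hz
  have hdvdQg : (X ^ m - C lam : F[X]) ∣ Q.comp (X ^ g) :=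
    hcop.symm.dvd_of_dvd_mul_right hz
  have hdvdQe : (X ^ m - C lam : F[X]) ∣ Q.comp (X ^ (g * g')) := by
    obtain ⟨c, hc⟩ := hdvdQg
    have hcomp : (Q.comp (X ^ g)).comp (X ^ g') = Q.comp (X ^ (g * g')) := by
      rw [comp_assoc, X_pow_comp, ← pow_mul, mul_comm g' g]
    have hpcomp : (X ^ m - C lam : F[X]) ∣ (X ^ m - C lam : F[X]).comp (X ^ g') := by
      have hcalc : (X ^ m - C lam : F[X]).comp (X ^ g') = (X ^ m) ^ g' - (C lam) ^ g' := by
        rw [sub_comp, X_pow_comp, C_comp, ← pow_mul, mul_comm g' m, pow_mul,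
          ← C_pow, hlamg']
      rw [hcalc]
      exact sub_dvd_pow_sub_pow _ _ g'
    have hQe : Q.comp (X ^ (g * g')) =
        (X ^ m - C lam : F[X]).comp (X ^ g') * c.comp (X ^ g') := by
      rw [← hcomp, hc, mul_comp]
    rw [hQe]
    exact hpcomp.mul_right _
  have hdvdQ : (X ^ m - C lam : F[X]) ∣ Q := by
    have hk := key_comp_dvd (X ^ m - C lam) (g * g') hd3 Q
    have hQeq : Q = Q.comp (X ^ (g * g')) - (Q.comp (X ^ (g * g')) - Q) := by ring
    rw [hQeq]
    exact dvd_sub hdvdQe hk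
  have : a - b = 0 := by
    rw [← hQ, Ideal.Quotient.eq_zero_iff_mem, Ideal.mem_span_singleton]
    exact hdvdQ
  exact sub_eq_zero.mp this
end

section
/- Let λ ∈ 𝔽_q^*, m a positive integer with gcd(m, g) = 1 and g ≡ 1 (mod ord(λ)), and suppose h(x) ∈ 𝔽_q[x] is coprime to x^m − λ. If Q(x) ∈ 𝔽_q[x] has degree less than m and Q(x^g)·h(x) ≡ 0 (mod x^m − λ), then Q(x) = 0. -/
open Polynomial

theorem stmt_5 (F : Type*) [Field F] [Fintype F] (m g : ℕ) (hm : 0 < m) (hg : 0 < g)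
    (lam : F) (hlam : lam ≠ 0) (hmg : Nat.gcd m g = 1)
    (hcong : g ≡ 1 [MOD orderOf lam]) (h : F[X])
    (hcop : IsCoprime h (X ^ m - C lam))
    (Q : F[X]) (hdeg : Q.degree < m)
    (hdvd : (X ^ m - C lam : F[X]) ∣ Q.comp (X ^ g) * h) :
    Q = 0 := by
  have hdvd' : (X ^ m - C lam : F[X]) ∣ Q.comp (X ^ g) :=
    hcop.symm.dvd_of_dvd_mul_right hdvd
  set d := orderOf lam with hd
  have hlam_ord : lam ^ d = 1 := pow_orderOf_eq_one lam
  set M := m * d with hM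
  have hgd : Nat.Coprime g d := by
    have : Nat.gcd g d = Nat.gcd 1 d := Nat.ModEq.gcd_eq hcong
    simpa [Nat.Coprime] using this
  have hgM : Nat.Coprime g M := Nat.Coprime.mul_right (Nat.coprime_comm.mp hmg) hgd
  obtain ⟨g', hgg'⟩ : ∃ g', g * g' ≡ 1 [MOD M] := by
    rcases Nat.eq_zero_or_pos M with h0 | hpos
    · refine ⟨1, ?_⟩
      have : g = 1 := by simpa [h0, Nat.Coprime] using hgM
      simp [this, Nat.ModEq]
    · refine ⟨g ^ (M.totient - 1), ?_⟩
      have ht : 1 ≤ M.totient := Nat.totient_pos.mpr hpos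
      have heq : g * g ^ (M.totient - 1) = g ^ M.totient := by
        rw [← pow_succ']
        congr 1
        omega
      rw [heq]
      exact Nat.ModEq.pow_totient hgM
  have hdM : d ∣ M := dvd_mul_left d m
  have hg'd : g' ≡ 1 [MOD d] := by
    have h1 : g * g' ≡ 1 [MOD d] := hgg'.of_dvd hdM
    have h2 : g * g' ≡ 1 * g' [MOD d] := hcong.mul_right g'
    calc g' = 1 * g' := (one_mul g').symm
      _ ≡ g * g' [MOD d] := h2.symm
      _ ≡ 1 [MOD d] := h1
  have hlamg' : lam ^ g' = lam := by
    calc lam ^ g' = lam ^ (g' % d) := pow_eq_pow_mod g' hlam_ord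
      _ = lam ^ (1 % d) := by rw [hg'd]
      _ = lam ^ 1 := (pow_eq_pow_mod 1 hlam_ord).symm
      _ = lam := pow_one lam
  -- work in AdjoinRoot (X^m - C lam)
  let x : AdjoinRoot (X ^ m - C lam : F[X]) := AdjoinRoot.root (X ^ m - C lam)
  have hxm : x ^ m = algebraMap F _ lam := by
    have h0 : (Polynomial.aeval x) (X ^ m - C lam : F[X]) = 0 := by
      rw [AdjoinRoot.aeval_eq, AdjoinRoot.mk_self]
    simp only [map_sub, map_pow, aeval_X, aeval_C] at h0
    exact sub_eq_zero.mp h0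
  have hxM : x ^ M = 1 := by
    rw [hM, pow_mul, hxm, ← map_pow, hlam_ord, map_one]
  have hpsi0 : (Polynomial.aeval (x ^ g')) (X ^ m - C lam : F[X]) = 0 := by
    simp only [map_sub, map_pow, aeval_X, aeval_C]
    rw [← pow_mul, mul_comm g' m, pow_mul, hxm, ← map_pow, hlamg', sub_self]
  let ψ := AdjoinRoot.liftAlgHom (X ^ m - C lam : F[X]) (Algebra.ofId F _) (x ^ g') hpsi0
  have hψx : ψ x = x ^ g' := AdjoinRoot.liftAlgHom_root _ _ _ hpsi0
  have hQg : (Polynomial.aeval (x ^ g)) Q = 0 := by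
    have h1 : AdjoinRoot.mk (X ^ m - C lam : F[X]) (Q.comp (X ^ g)) = 0 :=
      (AdjoinRoot.mk_eq_zero).mpr hdvd'
    rw [← AdjoinRoot.aeval_eq, Polynomial.aeval_comp] at h1
    simpa using h1
  have hQx : (Polynomial.aeval x) Q = 0 := by
    have h2 := congrArg ψ hQg
    rw [← Polynomial.aeval_algHom_apply, map_pow, hψx, ← pow_mul, map_zero] at h2
    have hxgg' : x ^ (g' * g) = x := by
      calc x ^ (g' * g) = x ^ (g' * g % M) := pow_eq_pow_mod _ hxM
        _ = x ^ (1 % M) := by rw [mul_comm g' g, hgg']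
        _ = x ^ 1 := (pow_eq_pow_mod 1 hxM).symm
        _ = x := pow_one x
    rwa [hxgg'] at h2
  have hfQ : (X ^ m - C lam : F[X]) ∣ Q := by
    rwa [← AdjoinRoot.mk_eq_zero, ← AdjoinRoot.aeval_eq]
  have hdegf : (X ^ m - C lam : F[X]).degree = (m : WithBot ℕ) :=
    Polynomial.degree_X_pow_sub_C hm lam
  exact Polynomial.eq_zero_of_dvd_of_degree_lt hfQ (by rwa [hdegf])
end

section
/- Let h ∈ R = 𝔽_q[x]/(x³ − 1) be a unit and let A be the 3 × 3 circulant matrix of multiplication by h in the monomial basis. Then A is MDS if and only if both h and h^{-1} have Hamming weight 3. -/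
open Polynomial

set_option maxHeartbeats 2000000

def IsMDS {n : Type*} [Fintype n] [DecidableEq n] {F : Type*} [CommRing F]
    (A : Matrix n n F) : Prop :=
  ∀ (k : ℕ) (r c : Fin k → n), Function.Injective r → Function.Injective c →
    (A.submatrix r c).det ≠ 0

lemma inj1 {α : Type*} (a : α) : Function.Injective ![a] :=
  fun x y _ => Subsingleton.elim x y

lemma inj2 {α : Type*} (a b : α) (h : a ≠ b) : Function.Injective ![a, b] := by
  intro x y hxy
  fin_cases x <;> fin_cases y <;> simp_all

lemma fin3_mk_two (h : 2 < 3) : (⟨2, h⟩ : Fin 3) = 2 := rfl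

lemma mds_aux {F : Type*} [Field F] (A B : Matrix (Fin 3) (Fin 3) F) (hAB : A * B = 1) :
    IsMDS A ↔ (∀ i j, A i j ≠ 0) ∧ (∀ i j, B i j ≠ 0) := by
  have hBA : B * A = 1 := mul_eq_one_comm.mp hAB
  have hdet : A.det ≠ 0 := by
    intro h
    have h2 := congrArg Matrix.det hAB
    rw [Matrix.det_mul, h, zero_mul, Matrix.det_one] at h2
    exact zero_ne_one h2
  have hadj : A.adjugate = A.det • B := by
    calc A.adjugate = (B * A) * A.adjugate := by rw [hBA, one_mul]
    _ = B * (A * A.adjugate) := Matrix.mul_assoc _ _ _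
    _ = B * (A.det • 1) := by rw [Matrix.mul_adjugate]
    _ = A.det • B := by rw [Matrix.mul_smul, mul_one]
  have hadj' : ∀ i j, A.adjugate i j = A.det * B i j := by
    intro i j; rw [hadj]; simp
  constructor
  · intro h
    have hent : ∀ i j, A i j ≠ 0 := by
      intro i j
      have := h 1 ![i] ![j] (inj1 i) (inj1 j)
      rw [Matrix.det_fin_one] at this; simpa using this
    refine ⟨hent, fun i j hBij => ?_⟩
    have hm : ∀ a b p q : Fin 3, a ≠ b → p ≠ q → A a p * A b q - A a q * A b p ≠ 0 := by
      intro a b p q hab hpq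
      have := h 2 ![a,b] ![p,q] (inj2 _ _ hab) (inj2 _ _ hpq)
      rw [Matrix.det_fin_two] at this
      simpa using this
    have hne : A.adjugate i j ≠ 0 := by
      rw [Matrix.adjugate_fin_three]
      fin_cases i <;> fin_cases j <;> norm_num [fin3_mk_two, Matrix.cons_val_two, Matrix.tail_cons, Matrix.head_cons] <;>
        (intro hh; first
          | exact hm 0 1 0 1 (by decide) (by decide) (by linear_combination hh)
          | exact hm 0 1 0 1 (by decide) (by decide) (by linear_combination -hh)
          | exact hm 0 1 0 2 (by decide) (by decide) (by linear_combination hh)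
          | exact hm 0 1 0 2 (by decide) (by decide) (by linear_combination -hh)
          | exact hm 0 1 1 2 (by decide) (by decide) (by linear_combination hh)
          | exact hm 0 1 1 2 (by decide) (by decide) (by linear_combination -hh)
          | exact hm 0 2 0 1 (by decide) (by decide) (by linear_combination hh)
          | exact hm 0 2 0 1 (by decide) (by decide) (by linear_combination -hh)
          | exact hm 0 2 0 2 (by decide) (by decide) (by linear_combination hh)
          | exact hm 0 2 0 2 (by decide) (by decide) (by linear_combination -hh)
          | exact hm 0 2 1 2 (by decide) (by decide) (by linear_combination hh)
          | exact hm 0 2 1 2 (by decide) (by decide) (by linear_combination -hh)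
          | exact hm 1 2 0 1 (by decide) (by decide) (by linear_combination hh)
          | exact hm 1 2 0 1 (by decide) (by decide) (by linear_combination -hh)
          | exact hm 1 2 0 2 (by decide) (by decide) (by linear_combination hh)
          | exact hm 1 2 0 2 (by decide) (by decide) (by linear_combination -hh)
          | exact hm 1 2 1 2 (by decide) (by decide) (by linear_combination hh)
          | exact hm 1 2 1 2 (by decide) (by decide) (by linear_combination -hh))
    rw [hadj' i j, hBij, mul_zero] at hne
    exact hne rfl
  · rintro ⟨hA, hB⟩ k r c hr hc
    have hk : k ≤ 3 := by
      have := Fintype.card_le_of_injective r hr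
      simpa using this
    have hadjne : ∀ i j, A.adjugate i j ≠ 0 := fun i j => by
      rw [hadj' i j]; exact mul_ne_zero hdet (hB i j)
    interval_cases k
    · simp [Matrix.det_fin_zero]
    · rw [Matrix.det_fin_one]
      exact hA _ _
    · rw [Matrix.det_fin_two]
      have h00 := hadjne 0 0
      have h01 := hadjne 0 1
      have h02 := hadjne 0 2
      have h10 := hadjne 1 0
      have h11 := hadjne 1 1
      have h12 := hadjne 1 2
      have h20 := hadjne 2 0
      have h21 := hadjne 2 1
      have h22 := hadjne 2 2
      rw [Matrix.adjugate_fin_three] at h00 h01 h02 h10 h11 h12 h20 h21 h22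
      norm_num [Matrix.cons_val_two, Matrix.tail_cons, Matrix.head_cons] at h00 h01 h02 h10 h11 h12 h20 h21 h22
      have hr01 : r 0 ≠ r 1 := fun h => absurd (hr h) (by decide)
      have hc01 : c 0 ≠ c 1 := fun h => absurd (hc h) (by decide)
      simp only [Matrix.submatrix_apply]
      obtain ⟨a, ha⟩ : ∃ a, r 0 = a := ⟨_, rfl⟩
      obtain ⟨b, hb⟩ : ∃ b, r 1 = b := ⟨_, rfl⟩
      obtain ⟨p, hp⟩ : ∃ p, c 0 = p := ⟨_, rfl⟩
      obtain ⟨q, hq⟩ : ∃ q, c 1 = q := ⟨_, rfl⟩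
      rw [ha, hb] at hr01
      rw [hp, hq] at hc01
      rw [ha, hb, hp, hq]
      clear ha hb hp hq hr hc
      fin_cases a <;> fin_cases b <;> fin_cases p <;> fin_cases q <;> norm_num [fin3_mk_two, Matrix.cons_val_two, Matrix.tail_cons, Matrix.head_cons] <;>
        first
          | exact absurd rfl hr01
          | exact absurd rfl hc01
          | (intro hh; first
              | exact h00 (by linear_combination hh) | exact h00 (by linear_combination -hh)
              | exact h01 (by linear_combination hh) | exact h01 (by linear_combination -hh)
              | exact h02 (by linear_combination hh) | exact h02 (by linear_combination -hh)
              | exact h10 (by linear_combination hh) | exact h10 (by linear_combination -hh)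
              | exact h11 (by linear_combination hh) | exact h11 (by linear_combination -hh)
              | exact h12 (by linear_combination hh) | exact h12 (by linear_combination -hh)
              | exact h20 (by linear_combination hh) | exact h20 (by linear_combination -hh)
              | exact h21 (by linear_combination hh) | exact h21 (by linear_combination -hh)
              | exact h22 (by linear_combination hh) | exact h22 (by linear_combination -hh))
    · have hrb : Function.Bijective r :=
        (Fintype.bijective_iff_injective_and_card r).mpr ⟨hr, rfl⟩
      have hcb : Function.Bijective c :=
        (Fintype.bijective_iff_injective_and_card c).mpr ⟨hc, rfl⟩
      have hsub : A.submatrix r c =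
          (A.submatrix (Equiv.ofBijective r hrb) (Equiv.ofBijective r hrb)).submatrix id
            ((Equiv.ofBijective c hcb).trans (Equiv.ofBijective r hrb).symm) := by
        ext i j
        simp [Matrix.submatrix_apply, Equiv.ofBijective_apply]
        exact congrArg (A (r i)) (Equiv.ofBijective_apply_symm_apply r hrb (c j)).symm
      rw [hsub, Matrix.det_permute', Matrix.det_submatrix_equiv_self]
      rcases Int.units_eq_one_or
          (Equiv.Perm.sign ((Equiv.ofBijective c hcb).trans (Equiv.ofBijective r hrb).symm)) with
        h | h <;> simp [h, hdet]

lemma isMDS_reindex {m n F : Type*} [Fintype m] [DecidableEq m] [Fintype n] [DecidableEq n]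
    [CommRing F] (e : m ≃ n) (A : Matrix m m F) :
    IsMDS (Matrix.reindex e e A) ↔ IsMDS A := by
  constructor
  · intro h k r c hr hc
    have h2 := h k (e ∘ r) (e ∘ c) (e.injective.comp hr) (e.injective.comp hc)
    have : (Matrix.reindex e e A).submatrix (e ∘ r) (e ∘ c) = A.submatrix r c := by
      ext i j; simp [Matrix.reindex_apply, Matrix.submatrix_apply]
    rwa [this] at h2
  · intro h k r c hr hc
    have : (Matrix.reindex e e A).submatrix r c =
        A.submatrix (e.symm ∘ r) (e.symm ∘ c) := by
      ext i j; simp [Matrix.reindex_apply, Matrix.submatrix_apply]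
    rw [this]
    exact h k _ _ (e.symm.injective.comp hr) (e.symm.injective.comp hc)

lemma mulRight_toMatrix {F R : Type*} [Field F] [CommRing R] [Algebra F R]
    (b : Module.Basis (Fin 3) F R) (g : R) (hb : ∀ i : Fin 3, b i = g ^ (i : ℕ))
    (hg : g ^ 3 = 1) (v : R) :
    LinearMap.toMatrix b b (LinearMap.mulRight F v) =
      !![b.repr v 0, b.repr v 2, b.repr v 1;
         b.repr v 1, b.repr v 0, b.repr v 2;
         b.repr v 2, b.repr v 1, b.repr v 0] := by
  have h1 : (1 : R) = b 0 := by rw [hb 0]; norm_num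
  have hgb : g = b 1 := by rw [hb 1]; norm_num
  have hg2 : g ^ 2 = b 2 := by rw [hb 2]; norm_num
  have hrepr : ∀ (x0 x1 x2 : F) (i : Fin 3),
      b.repr (x0 • (1 : R) + x1 • g + x2 • g ^ 2) i = ![x0, x1, x2] i := by
    intro x0 x1 x2 i
    rw [hg2, hgb, h1, map_add, map_add, map_smul, map_smul, map_smul,
      b.repr_self, b.repr_self, b.repr_self]
    fin_cases i <;>
      simp [Finsupp.single_apply]
  have hsum : v = b.repr v 0 • (1 : R) + b.repr v 1 • g + b.repr v 2 • g ^ 2 := by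
    have h := b.sum_repr v
    rw [Fin.sum_univ_three, hb 0, hb 1, hb 2] at h
    conv_lhs => rw [← h]
    norm_num
  have hmul1 : g * v = b.repr v 2 • (1 : R) + b.repr v 0 • g + b.repr v 1 • g ^ 2 := by
    conv_lhs => rw [hsum]
    simp only [Algebra.smul_def]
    linear_combination (algebraMap F R (b.repr v 2)) * hg
  have hmul2 : g ^ 2 * v = b.repr v 1 • (1 : R) + b.repr v 2 • g + b.repr v 0 • g ^ 2 := by
    conv_lhs => rw [hsum]
    simp only [Algebra.smul_def]
    linear_combination (algebraMap F R (b.repr v 1) + algebraMap F R (b.repr v 2) * g) * hg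
  ext i j
  rw [LinearMap.toMatrix_apply, LinearMap.mulRight_apply]
  fin_cases j
  · rw [show b (⟨0, by omega⟩ : Fin 3) = g ^ 0 from hb _, pow_zero, one_mul]
    conv_lhs => rw [hsum]
    rw [hrepr]
    fin_cases i <;> norm_num
  · rw [show b (⟨1, by omega⟩ : Fin 3) = g ^ 1 from hb _, pow_one, hmul1, hrepr]
    fin_cases i <;> norm_num
  · rw [show b (⟨2, by omega⟩ : Fin 3) = g ^ 2 from hb _, hmul2, hrepr]
    fin_cases i <;> norm_num

theorem stmt_17 (F : Type*) [Field F] [Fintype F]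
    (hmon : (X ^ 3 - 1 : F[X]).Monic)
    (u : (AdjoinRoot (X ^ 3 - 1 : F[X]))ˣ)
    (pb : PowerBasis F (AdjoinRoot (X ^ 3 - 1 : F[X])))
    (hpb : pb = AdjoinRoot.powerBasis' hmon)
    (A : Matrix (Fin pb.dim) (Fin pb.dim) F)
    (hA : A = LinearMap.toMatrix pb.basis pb.basis
      (LinearMap.mulRight F (u : AdjoinRoot (X ^ 3 - 1 : F[X])))) :
    IsMDS A ↔
      ((pb.basis.repr ((u : (AdjoinRoot (X ^ 3 - 1 : F[X]))ˣ) :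
          AdjoinRoot (X ^ 3 - 1 : F[X]))).support.card = 3 ∧
        (pb.basis.repr ((u⁻¹ : (AdjoinRoot (X ^ 3 - 1 : F[X]))ˣ) :
          AdjoinRoot (X ^ 3 - 1 : F[X]))).support.card = 3) := by
  have hdim : pb.dim = 3 := by
    rw [hpb, AdjoinRoot.powerBasis'_dim, show (1 : F[X]) = C 1 from (map_one C).symm,
      Polynomial.natDegree_X_pow_sub_C]
  have hgen : pb.gen ^ 3 = 1 := by
    have h0 : (AdjoinRoot.mk (X ^ 3 - 1 : F[X])) (X ^ 3 - 1) = 0 := AdjoinRoot.mk_self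
    rw [map_sub, map_pow, map_one, AdjoinRoot.mk_X] at h0
    rw [hpb, AdjoinRoot.powerBasis'_gen]
    exact sub_eq_zero.mp h0
  set e : Fin pb.dim ≃ Fin 3 := finCongr hdim with he
  set b' := pb.basis.reindex e with hb'def
  have hb' : ∀ i : Fin 3, b' i = pb.gen ^ (i : ℕ) := by
    intro i
    rw [hb'def, Module.Basis.reindex_apply, pb.basis_eq_pow]
    congr 1 <;> simp [he]
  have hM := mulRight_toMatrix b' pb.gen hb' hgen (↑u)
  have hN := mulRight_toMatrix b' pb.gen hb' hgen (↑u⁻¹)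
  have hMN : LinearMap.toMatrix b' b' (LinearMap.mulRight F ((u : _) : AdjoinRoot (X ^ 3 - 1 : F[X]))) *
      LinearMap.toMatrix b' b' (LinearMap.mulRight F ((u⁻¹ : _) : AdjoinRoot (X ^ 3 - 1 : F[X]))) = 1 := by
    rw [← LinearMap.toMatrix_comp b' b' b']
    have hcomp : (LinearMap.mulRight F ((u : _) : AdjoinRoot (X ^ 3 - 1 : F[X]))).comp
        (LinearMap.mulRight F ((u⁻¹ : _) : AdjoinRoot (X ^ 3 - 1 : F[X]))) = LinearMap.id := by
      ext x
      simp [mul_assoc]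
    rw [hcomp, LinearMap.toMatrix_id]
  have hre : Matrix.reindex e e A =
      LinearMap.toMatrix b' b' (LinearMap.mulRight F ((u : _) : AdjoinRoot (X ^ 3 - 1 : F[X]))) := by
    ext i j
    rw [hA]
    simp [Matrix.reindex_apply, Matrix.submatrix_apply, LinearMap.toMatrix_apply,
      hb'def, Module.Basis.repr_reindex_apply, Module.Basis.reindex_apply]
  have hsupp : ∀ v : AdjoinRoot (X ^ 3 - 1 : F[X]),
      ((pb.basis.repr v).support.card = 3 ↔ ∀ i : Fin 3, b'.repr v i ≠ 0) := by
    intro v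
    have hcard : (pb.basis.repr v).support.card = (b'.repr v).support.card := by
      rw [hb'def, Module.Basis.repr_reindex, Finsupp.mapDomain_support_of_injective e.injective,
        Finset.card_image_of_injective _ e.injective]
    rw [hcard]
    constructor
    · intro h i
      have huniv : (b'.repr v).support = Finset.univ :=
        Finset.eq_univ_of_card _ (by rw [h]; simp)
      exact Finsupp.mem_support_iff.mp (huniv ▸ Finset.mem_univ i)
    · intro h
      have huniv : (b'.repr v).support = Finset.univ :=
        Finset.eq_univ_iff_forall.mpr fun i => Finsupp.mem_support_iff.mpr (h i)
      rw [huniv, Finset.card_univ, Fintype.card_fin]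
  rw [← isMDS_reindex e A, hre, mds_aux _ _ hMN, hsupp, hsupp]
  constructor
  · rintro ⟨h1, h2⟩
    constructor
    · intro i
      fin_cases i
      · have := h1 0 0; rw [hM] at this; simpa using this
      · have := h1 1 0; rw [hM] at this; simpa using this
      · have := h1 2 0; rw [hM] at this; simpa using this
    · intro i
      fin_cases i
      · have := h2 0 0; rw [hN] at this; simpa using this
      · have := h2 1 0; rw [hN] at this; simpa using this
      · have := h2 2 0; rw [hN] at this; simpa using this
  · rintro ⟨h1, h2⟩
    constructor
    · intro i j
      rw [hM]
      fin_cases i <;> fin_cases j <;> simp <;>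
        first | exact h1 0 | exact h1 1 | exact h1 2
    · intro i j
      rw [hN]
      fin_cases i <;> fin_cases j <;> simp <;>
        first | exact h2 0 | exact h2 1 | exact h2 2
end
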